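/- Under assumptions (i) M ⊥ R | X, G=2, (ii) M ⊥ G | X, and (iii) M ⊥ R | X, Y, G=1, with w(x,y) = 1/p(R=1|X=x,Y=y,G=1) strictly positive, for any function h(X,M): E[w(X,Y)·R·h(X,M) | G=1] = E[ E[h(X,M) | X, R=1, G=2] | G=1 ]. -/

import Mathlib

open Finset Set Real

noncomputable def Pr {Ω : Type*} [Fintype Ω] (μ : Ω → ℝ) (A : Set Ω) : ℝ :=
  ∑ ω, A.indicator μ ω

noncomputable def cPr {Ω : Type*} [Fintype Ω] (μ : Ω → ℝ) (A B : Set Ω) : ℝ :=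
  Pr μ (A ∩ B) / Pr μ B

noncomputable def cE {Ω : Type*} [Fintype Ω] (μ : Ω → ℝ) (f : Ω → ℝ) (B : Set Ω) : ℝ :=
  (∑ ω, B.indicator (fun ω' => μ ω' * f ω') ω) / Pr μ B

section Aux
variable {Ω : Type*} [Fintype Ω] (μ : Ω → ℝ)

lemma sum_indicator_aux (A : Set Ω) (g : Ω → ℝ) [DecidablePred (· ∈ A)] :
    ∑ ω, A.indicator g ω = ∑ ω ∈ Finset.univ.filter (· ∈ A), g ω := by
  rw [← Finset.sum_filter_add_sum_filter_not Finset.univ (· ∈ A) (A.indicator g)]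
  have h2 : ∑ ω ∈ Finset.univ.filter (fun ω => ¬ ω ∈ A), A.indicator g ω = 0 :=
    Finset.sum_eq_zero fun ω hω =>
      Set.indicator_of_notMem (by simpa using (Finset.mem_filter.mp hω).2) g
  rw [h2, add_zero]
  exact Finset.sum_congr rfl fun ω hω =>
    Set.indicator_of_mem (by simpa using (Finset.mem_filter.mp hω).2) g

lemma Pr_eq_sum (A : Set Ω) [DecidablePred (· ∈ A)] :
    Pr μ A = ∑ ω ∈ Finset.univ.filter (· ∈ A), μ ω := sum_indicator_aux A μ

lemma Pr_bridge (A : Set Ω) (p : Ω → Prop) [DecidablePred p] (hiff : ∀ ω, ω ∈ A ↔ p ω) :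
    Pr μ A = ∑ ω ∈ Finset.univ.filter p, μ ω := by
  classical
  rw [Pr_eq_sum]
  apply Finset.sum_congr _ (fun _ _ => rfl)
  ext ω; simp [hiff]

lemma Pr_mono (hμ0 : ∀ ω, 0 ≤ μ ω) {A B : Set Ω} (hAB : A ⊆ B) : Pr μ A ≤ Pr μ B := by
  classical
  rw [Pr_eq_sum, Pr_eq_sum]
  apply Finset.sum_le_sum_of_subset_of_nonneg
  · intro ω hω
    simp only [Finset.mem_filter, Finset.mem_univ, true_and] at *
    exact hAB hω
  · exact fun ω _ _ => hμ0 ω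

lemma Pr_pos_mono (hμ0 : ∀ ω, 0 ≤ μ ω) {A B : Set Ω} (hA : 0 < Pr μ A) (hAB : A ⊆ B) :
    0 < Pr μ B := lt_of_lt_of_le hA (Pr_mono μ hμ0 hAB)

lemma cE_eq_sum (F : Ω → ℝ) (p : Ω → Prop) [DecidablePred p] :
    cE μ F {ω | p ω} = (∑ ω ∈ Finset.univ.filter p, μ ω * F ω) / Pr μ {ω | p ω} := by
  unfold cE
  congr 1
  rw [sum_indicator_aux]
  apply Finset.sum_congr _ (fun _ _ => rfl)
  ext ω; simp

end Aux

theorem stmt14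
    {Ω 𝓧 𝓜 : Type*} [Fintype Ω]
    (μ : Ω → ℝ) (X : Ω → 𝓧) (M : Ω → 𝓜) (Y : Ω → ℝ) (R G : Ω → ℕ)
    (h : 𝓧 → 𝓜 → ℝ)
    (hμ0 : ∀ ω, 0 ≤ μ ω) (hμ1 : ∑ ω, μ ω = 1)
    (hR : ∀ ω, R ω = 0 ∨ R ω = 1)
    (hG : ∀ ω, G ω = 1 ∨ G ω = 2)
    (hpos : ∀ x ∈ Set.range X, ∀ m ∈ Set.range M, ∀ y ∈ Set.range Y, ∀ r g : ℕ,
      (r = 0 ∨ r = 1) → (g = 1 ∨ g = 2) →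
      0 < Pr μ {ω | X ω = x ∧ M ω = m ∧ Y ω = y ∧ R ω = r ∧ G ω = g})
    (hMAR : ∀ (m : 𝓜) (r : ℕ) (x : 𝓧),
      0 < Pr μ {ω | X ω = x ∧ G ω = 2} →
      cPr μ {ω | M ω = m ∧ R ω = r} {ω | X ω = x ∧ G ω = 2} =
        cPr μ {ω | M ω = m} {ω | X ω = x ∧ G ω = 2} *
        cPr μ {ω | R ω = r} {ω | X ω = x ∧ G ω = 2})
    (hSel : ∀ (m : 𝓜) (g : ℕ) (x : 𝓧),
      0 < Pr μ {ω | X ω = x} →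
      cPr μ {ω | M ω = m ∧ G ω = g} {ω | X ω = x} =
        cPr μ {ω | M ω = m} {ω | X ω = x} * cPr μ {ω | G ω = g} {ω | X ω = x})
    (hCI : ∀ (m : 𝓜) (r : ℕ) (x : 𝓧) (y : ℝ),
      0 < Pr μ {ω | X ω = x ∧ Y ω = y ∧ G ω = 1} →
      cPr μ {ω | M ω = m ∧ R ω = r} {ω | X ω = x ∧ Y ω = y ∧ G ω = 1} =
        cPr μ {ω | M ω = m} {ω | X ω = x ∧ Y ω = y ∧ G ω = 1} *
        cPr μ {ω | R ω = r} {ω | X ω = x ∧ Y ω = y ∧ G ω = 1})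
 :
    cE μ (fun ω =>
        (1 / cPr μ {ω' | R ω' = 1} {ω' | X ω' = X ω ∧ Y ω' = Y ω ∧ G ω' = 1}) * (R ω : ℝ) *
          h (X ω) (M ω))
      {ω | G ω = 1} =
    cE μ (fun ω =>
        cE μ (fun ω' => h (X ω') (M ω')) {ω' | X ω' = X ω ∧ R ω' = 1 ∧ G ω' = 2})
      {ω | G ω = 1} := by
  classical
  have hne : Nonempty Ω := by
    rcases isEmpty_or_nonempty Ω with hE | hN
    · rw [Finset.univ_eq_empty, Finset.sum_empty] at hμ1; norm_num at hμ1
    · exact hN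
  obtain ⟨ω0⟩ := hne
  have hposS : ∀ (S : Set Ω) (m : 𝓜), m ∈ Set.range M → ∀ (x : 𝓧), x ∈ Set.range X →
      ∀ (y : ℝ), y ∈ Set.range Y → ∀ r g : ℕ, (r = 0 ∨ r = 1) → (g = 1 ∨ g = 2) →
      {ω | X ω = x ∧ M ω = m ∧ Y ω = y ∧ R ω = r ∧ G ω = g} ⊆ S → 0 < Pr μ S :=
    fun S m hm x hx y hy r g hr hg hsub =>
      Pr_pos_mono μ hμ0 (hpos x hx m hm y hy r g hr hg) hsub
  have sumR : ∀ t : Finset Ω, ∑ ω ∈ t, μ ω * (R ω : ℝ)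
      = ∑ ω ∈ t.filter (fun ω => R ω = 1), μ ω := by
    intro t
    rw [← Finset.sum_filter_add_sum_filter_not t (fun ω => R ω = 1) (fun ω => μ ω * (R ω : ℝ))]
    have h1 : ∑ ω ∈ t.filter (fun ω => R ω = 1), μ ω * (R ω : ℝ)
        = ∑ ω ∈ t.filter (fun ω => R ω = 1), μ ω :=
      Finset.sum_congr rfl fun ω hω => by
        rw [(Finset.mem_filter.mp hω).2]; simp
    have h0 : ∑ ω ∈ t.filter (fun ω => ¬ R ω = 1), μ ω * (R ω : ℝ) = 0 :=
      Finset.sum_eq_zero fun ω hω => by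
        rcases hR ω with h3 | h3
        · rw [h3]; simp
        · exact absurd h3 (Finset.mem_filter.mp hω).2
    rw [h1, h0, add_zero]
  rw [cE_eq_sum μ _ (fun ω => G ω = 1), cE_eq_sum μ _ (fun ω => G ω = 1)]
  congr 1
  have hmaps : ∀ ω ∈ Finset.univ.filter (fun ω => G ω = 1),
      X ω ∈ (Finset.univ.filter (fun ω => G ω = 1)).image X :=
    fun ω hω => Finset.mem_image_of_mem X hω
  rw [← Finset.sum_fiberwise_of_maps_to hmaps
      (fun ω => μ ω * ((1 / cPr μ {ω' | R ω' = 1} {ω' | X ω' = X ω ∧ Y ω' = Y ω ∧ G ω' = 1})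
        * (R ω : ℝ) * h (X ω) (M ω))),
    ← Finset.sum_fiberwise_of_maps_to hmaps
      (fun ω => μ ω * cE μ (fun ω' => h (X ω') (M ω')) {ω' | X ω' = X ω ∧ R ω' = 1 ∧ G ω' = 2})]
  apply Finset.sum_congr rfl
  intro x hx
  obtain ⟨ωx, hωxs, hXωx⟩ := Finset.mem_image.mp hx
  have hxr : x ∈ Set.range X := ⟨ωx, hXωx⟩
  set s : Finset Ω := Finset.filter (fun ω => X ω = x) (Finset.univ.filter (fun ω => G ω = 1))
    with hs
  have hsX : ∀ ω ∈ s, X ω = x := fun ω hω => (Finset.mem_filter.mp hω).2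
  -- replace X ω by x everywhere
  have stepL : ∑ ω ∈ s, μ ω * ((1 / cPr μ {ω' | R ω' = 1} {ω' | X ω' = X ω ∧ Y ω' = Y ω ∧ G ω' = 1})
        * (R ω : ℝ) * h (X ω) (M ω))
      = ∑ ω ∈ s, μ ω * ((1 / cPr μ {ω' | R ω' = 1} {ω' | X ω' = x ∧ Y ω' = Y ω ∧ G ω' = 1})
        * (R ω : ℝ) * h x (M ω)) :=
    Finset.sum_congr rfl fun ω hω => by rw [hsX ω hω]
  have stepR : ∑ ω ∈ s, μ ω * cE μ (fun ω' => h (X ω') (M ω')) {ω' | X ω' = X ω ∧ R ω' = 1 ∧ G ω' = 2}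
      = (∑ ω ∈ s, μ ω) * cE μ (fun ω' => h (X ω') (M ω')) {ω' | X ω' = x ∧ R ω' = 1 ∧ G ω' = 2} := by
    rw [Finset.sum_mul]
    exact Finset.sum_congr rfl fun ω hω => by rw [hsX ω hω]
  rw [stepL, stepR]
  have claimA : ∑ ω ∈ s, μ ω * ((1 / cPr μ {ω' | R ω' = 1} {ω' | X ω' = x ∧ Y ω' = Y ω ∧ G ω' = 1})
        * (R ω : ℝ) * h x (M ω)) = ∑ ω ∈ s, μ ω * h x (M ω) := by
    have hmaps2 : ∀ ω ∈ s, (Y ω, M ω) ∈ s.image (fun ω => (Y ω, M ω)) :=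
      fun ω hω => Finset.mem_image_of_mem _ hω
    rw [← Finset.sum_fiberwise_of_maps_to hmaps2
        (fun ω => μ ω * ((1 / cPr μ {ω' | R ω' = 1} {ω' | X ω' = x ∧ Y ω' = Y ω ∧ G ω' = 1})
          * (R ω : ℝ) * h x (M ω))),
      ← Finset.sum_fiberwise_of_maps_to hmaps2 (fun ω => μ ω * h x (M ω))]
    apply Finset.sum_congr rfl
    rintro ⟨y, m⟩ hym
    obtain ⟨ω1, hω1s, hω1⟩ := Finset.mem_image.mp hym
    rw [Prod.mk.injEq] at hω1
    have hyr : y ∈ Set.range Y := ⟨ω1, hω1.1⟩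
    have hmr : m ∈ Set.range M := ⟨ω1, hω1.2⟩
    have stepA1 : ∑ ω ∈ Finset.filter (fun ω => (Y ω, M ω) = (y, m)) s,
        μ ω * ((1 / cPr μ {ω' | R ω' = 1} {ω' | X ω' = x ∧ Y ω' = Y ω ∧ G ω' = 1})
          * (R ω : ℝ) * h x (M ω))
        = ∑ ω ∈ Finset.filter (fun ω => (Y ω, M ω) = (y, m)) s,
          (1 / cPr μ {ω' | R ω' = 1} {ω' | X ω' = x ∧ Y ω' = y ∧ G ω' = 1} * h x m)
            * (μ ω * (R ω : ℝ)) := by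
      apply Finset.sum_congr rfl
      intro ω hω
      have h2 := (Finset.mem_filter.mp hω).2
      rw [Prod.mk.injEq] at h2
      rw [h2.1, h2.2]; ring
    have stepA2 : ∑ ω ∈ Finset.filter (fun ω => (Y ω, M ω) = (y, m)) s, μ ω * h x (M ω)
        = ∑ ω ∈ Finset.filter (fun ω => (Y ω, M ω) = (y, m)) s, h x m * μ ω := by
      apply Finset.sum_congr rfl
      intro ω hω
      have h2 := (Finset.mem_filter.mp hω).2
      rw [Prod.mk.injEq] at h2
      rw [h2.2]; ring
    rw [stepA1, stepA2, ← Finset.mul_sum, ← Finset.mul_sum, sumR]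
    have bridge1 : ∑ ω ∈ Finset.filter (fun ω => R ω = 1)
          (Finset.filter (fun ω => (Y ω, M ω) = (y, m)) s), μ ω
        = Pr μ ({ω | M ω = m ∧ R ω = 1} ∩ {ω | X ω = x ∧ Y ω = y ∧ G ω = 1}) := by
      rw [Pr_bridge μ ({ω | M ω = m ∧ R ω = 1} ∩ {ω | X ω = x ∧ Y ω = y ∧ G ω = 1})
        (fun ω => (M ω = m ∧ R ω = 1) ∧ (X ω = x ∧ Y ω = y ∧ G ω = 1))
        (fun ω => by simp only [Set.mem_inter_iff, Set.mem_setOf_eq])]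
      apply Finset.sum_congr _ (fun _ _ => rfl)
      ext ω
      simp only [hs, Finset.mem_filter, Finset.mem_univ, true_and, Prod.mk.injEq]
      tauto
    have bridge2 : ∑ ω ∈ Finset.filter (fun ω => (Y ω, M ω) = (y, m)) s, μ ω
        = Pr μ ({ω | M ω = m} ∩ {ω | X ω = x ∧ Y ω = y ∧ G ω = 1}) := by
      rw [Pr_bridge μ ({ω | M ω = m} ∩ {ω | X ω = x ∧ Y ω = y ∧ G ω = 1})
        (fun ω => M ω = m ∧ (X ω = x ∧ Y ω = y ∧ G ω = 1))
        (fun ω => by simp only [Set.mem_inter_iff, Set.mem_setOf_eq])]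
      apply Finset.sum_congr _ (fun _ _ => rfl)
      ext ω
      simp only [hs, Finset.mem_filter, Finset.mem_univ, true_and, Prod.mk.injEq]
      tauto
    rw [bridge1, bridge2]
    have hBpos : 0 < Pr μ {ω | X ω = x ∧ Y ω = y ∧ G ω = 1} :=
      hposS _ (M ω0) ⟨ω0, rfl⟩ x hxr y hyr 1 1 (Or.inr rfl) (Or.inl rfl)
        (fun ω hω => ⟨hω.1, hω.2.2.1, hω.2.2.2.2⟩)
    have hRBpos : 0 < Pr μ ({ω | R ω = 1} ∩ {ω | X ω = x ∧ Y ω = y ∧ G ω = 1}) :=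
      hposS _ (M ω0) ⟨ω0, rfl⟩ x hxr y hyr 1 1 (Or.inr rfl) (Or.inl rfl)
        (fun ω hω => ⟨hω.2.2.2.1, hω.1, hω.2.2.1, hω.2.2.2.2⟩)
    have key := hCI m 1 x y hBpos
    simp only [cPr] at key ⊢
    have h1 := hBpos.ne'
    have h2 := hRBpos.ne'
    field_simp at key ⊢
    refine mul_right_cancel₀ h1 ?_
    linear_combination (h x m) * Pr μ {ω | X ω = x ∧ Y ω = y ∧ G ω = 1} * key
  have claimB : ∑ ω ∈ s, μ ω * h x (M ω)
      = (∑ ω ∈ s, μ ω) * cE μ (fun ω' => h (X ω') (M ω')) {ω' | X ω' = x ∧ R ω' = 1 ∧ G ω' = 2} := by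
    have hppos : 0 < Pr μ {ω | X ω = x} :=
      hposS _ (M ω0) ⟨ω0, rfl⟩ x hxr (Y ω0) ⟨ω0, rfl⟩ 1 1 (Or.inr rfl) (Or.inl rfl)
        (fun ω hω => hω.1)
    have hdpos : 0 < Pr μ {ω | X ω = x ∧ G ω = 2} :=
      hposS _ (M ω0) ⟨ω0, rfl⟩ x hxr (Y ω0) ⟨ω0, rfl⟩ 1 2 (Or.inr rfl) (Or.inr rfl)
        (fun ω hω => ⟨hω.1, hω.2.2.2.2⟩)
    have hDpos : 0 < Pr μ {ω' | X ω' = x ∧ R ω' = 1 ∧ G ω' = 2} :=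
      hposS _ (M ω0) ⟨ω0, rfl⟩ x hxr (Y ω0) ⟨ω0, rfl⟩ 1 2 (Or.inr rfl) (Or.inr rfl)
        (fun ω hω => ⟨hω.1, hω.2.2.2.1, hω.2.2.2.2⟩)
    rw [cE_eq_sum μ _ (fun ω' => X ω' = x ∧ R ω' = 1 ∧ G ω' = 2), ← mul_div_assoc,
      eq_div_iff hDpos.ne']
    have hNum : ∑ ω ∈ Finset.univ.filter (fun ω' => X ω' = x ∧ R ω' = 1 ∧ G ω' = 2),
          μ ω * h (X ω) (M ω)
        = ∑ ω ∈ Finset.univ.filter (fun ω' => X ω' = x ∧ R ω' = 1 ∧ G ω' = 2), μ ω * h x (M ω) :=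
      Finset.sum_congr rfl fun ω hω => by rw [(Finset.mem_filter.mp hω).2.1]
    rw [hNum]
    rw [← Finset.sum_fiberwise_of_maps_to (t := Finset.univ.image M)
        (s := s) (fun ω _ => Finset.mem_image_of_mem M (Finset.mem_univ ω))
        (fun ω => μ ω * h x (M ω)),
      ← Finset.sum_fiberwise_of_maps_to (t := Finset.univ.image M)
        (s := Finset.univ.filter (fun ω' => X ω' = x ∧ R ω' = 1 ∧ G ω' = 2))
        (fun ω _ => Finset.mem_image_of_mem M (Finset.mem_univ ω))
        (fun ω => μ ω * h x (M ω))]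
    rw [Finset.sum_mul, Finset.mul_sum]
    apply Finset.sum_congr rfl
    intro m hm
    have e1 : ∑ ω ∈ Finset.filter (fun ω => M ω = m) s, μ ω * h x (M ω)
        = (∑ ω ∈ Finset.filter (fun ω => M ω = m) s, μ ω) * h x m := by
      rw [Finset.sum_mul]
      exact Finset.sum_congr rfl fun ω hω => by rw [(Finset.mem_filter.mp hω).2]
    have e2 : ∑ ω ∈ Finset.filter (fun ω => M ω = m)
          (Finset.univ.filter (fun ω' => X ω' = x ∧ R ω' = 1 ∧ G ω' = 2)), μ ω * h x (M ω)
        = (∑ ω ∈ Finset.filter (fun ω => M ω = m)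
          (Finset.univ.filter (fun ω' => X ω' = x ∧ R ω' = 1 ∧ G ω' = 2)), μ ω) * h x m := by
      rw [Finset.sum_mul]
      exact Finset.sum_congr rfl fun ω hω => by rw [(Finset.mem_filter.mp hω).2]
    rw [e1, e2]
    have bridgeA1 : ∑ ω ∈ Finset.filter (fun ω => M ω = m) s, μ ω
        = Pr μ ({ω | M ω = m ∧ G ω = 1} ∩ {ω | X ω = x}) := by
      rw [Pr_bridge μ ({ω | M ω = m ∧ G ω = 1} ∩ {ω | X ω = x})
        (fun ω => (M ω = m ∧ G ω = 1) ∧ X ω = x)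
        (fun ω => by simp only [Set.mem_inter_iff, Set.mem_setOf_eq])]
      apply Finset.sum_congr _ (fun _ _ => rfl)
      ext ω
      simp only [hs, Finset.mem_filter, Finset.mem_univ, true_and]
      tauto
    have bridgea : ∑ ω ∈ Finset.filter (fun ω => M ω = m)
          (Finset.univ.filter (fun ω' => X ω' = x ∧ R ω' = 1 ∧ G ω' = 2)), μ ω
        = Pr μ ({ω | M ω = m ∧ R ω = 1} ∩ {ω | X ω = x ∧ G ω = 2}) := by
      rw [Pr_bridge μ ({ω | M ω = m ∧ R ω = 1} ∩ {ω | X ω = x ∧ G ω = 2})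
        (fun ω => (M ω = m ∧ R ω = 1) ∧ (X ω = x ∧ G ω = 2))
        (fun ω => by simp only [Set.mem_inter_iff, Set.mem_setOf_eq])]
      apply Finset.sum_congr _ (fun _ _ => rfl)
      ext ω
      simp only [Finset.mem_filter, Finset.mem_univ, true_and]
      tauto
    have bridgeq1 : ∑ ω ∈ s, μ ω = Pr μ ({ω | G ω = 1} ∩ {ω | X ω = x}) := by
      rw [Pr_bridge μ ({ω | G ω = 1} ∩ {ω | X ω = x})
        (fun ω => G ω = 1 ∧ X ω = x)
        (fun ω => by simp only [Set.mem_inter_iff, Set.mem_setOf_eq])]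
      apply Finset.sum_congr _ (fun _ _ => rfl)
      ext ω
      simp only [hs, Finset.mem_filter, Finset.mem_univ, true_and]
    have bridgeD : Pr μ {ω' | X ω' = x ∧ R ω' = 1 ∧ G ω' = 2}
        = Pr μ ({ω | R ω = 1} ∩ {ω | X ω = x ∧ G ω = 2}) := by
      congr 1
      ext ω
      simp only [Set.mem_inter_iff, Set.mem_setOf_eq]
      tauto
    rw [bridgeA1, bridgea, bridgeq1, bridgeD]
    suffices key2 : Pr μ ({ω | M ω = m ∧ G ω = 1} ∩ {ω | X ω = x})
        * Pr μ ({ω | R ω = 1} ∩ {ω | X ω = x ∧ G ω = 2})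
        = Pr μ ({ω | G ω = 1} ∩ {ω | X ω = x})
        * Pr μ ({ω | M ω = m ∧ R ω = 1} ∩ {ω | X ω = x ∧ G ω = 2}) by
      linear_combination (h x m) * key2
    have hMARi := hMAR m 1 x hdpos
    have hSel1 := hSel m 1 x hppos
    have hSel2 := hSel m 2 x hppos
    simp only [cPr] at hMARi hSel1 hSel2
    have hb : Pr μ ({ω | M ω = m} ∩ {ω | X ω = x ∧ G ω = 2})
        = Pr μ ({ω | M ω = m ∧ G ω = 2} ∩ {ω | X ω = x}) := by
      congr 1; ext ω; simp only [Set.mem_inter_iff, Set.mem_setOf_eq]; tauto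
    have hd2 : Pr μ ({ω | G ω = 2} ∩ {ω | X ω = x}) = Pr μ {ω | X ω = x ∧ G ω = 2} := by
      congr 1; ext ω; simp only [Set.mem_inter_iff, Set.mem_setOf_eq]; tauto
    rw [hb] at hMARi
    rw [hd2] at hSel2
    have hdne := hdpos.ne'
    have hpne := hppos.ne'
    have E1 : Pr μ ({ω | M ω = m ∧ R ω = 1} ∩ {ω | X ω = x ∧ G ω = 2})
          * Pr μ {ω | X ω = x ∧ G ω = 2}
        = Pr μ ({ω | M ω = m ∧ G ω = 2} ∩ {ω | X ω = x})
          * Pr μ ({ω | R ω = 1} ∩ {ω | X ω = x ∧ G ω = 2}) := by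
      field_simp at hMARi
      refine mul_right_cancel₀ hdne ?_
      linear_combination Pr μ {ω | X ω = x ∧ G ω = 2} * hMARi
    have E2 : Pr μ ({ω | M ω = m ∧ G ω = 2} ∩ {ω | X ω = x}) * Pr μ {ω | X ω = x}
        = Pr μ ({ω | M ω = m} ∩ {ω | X ω = x}) * Pr μ {ω | X ω = x ∧ G ω = 2} := by
      field_simp at hSel2
      refine mul_right_cancel₀ hpne ?_
      linear_combination Pr μ {ω | X ω = x} * hSel2
    have E3 : Pr μ ({ω | M ω = m ∧ G ω = 1} ∩ {ω | X ω = x}) * Pr μ {ω | X ω = x}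
        = Pr μ ({ω | M ω = m} ∩ {ω | X ω = x}) * Pr μ ({ω | G ω = 1} ∩ {ω | X ω = x}) := by
      field_simp at hSel1
      refine mul_right_cancel₀ hpne ?_
      linear_combination Pr μ {ω | X ω = x} * hSel1
    have h4 : Pr μ ({ω | M ω = m ∧ G ω = 1} ∩ {ω | X ω = x})
          * Pr μ ({ω | R ω = 1} ∩ {ω | X ω = x ∧ G ω = 2})
          * (Pr μ {ω | X ω = x ∧ G ω = 2} * Pr μ {ω | X ω = x})
        = Pr μ ({ω | G ω = 1} ∩ {ω | X ω = x})
          * Pr μ ({ω | M ω = m ∧ R ω = 1} ∩ {ω | X ω = x ∧ G ω = 2})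
          * (Pr μ {ω | X ω = x ∧ G ω = 2} * Pr μ {ω | X ω = x}) := by
      linear_combination Pr μ ({ω | R ω = 1} ∩ {ω | X ω = x ∧ G ω = 2})
            * Pr μ {ω | X ω = x ∧ G ω = 2} * E3
          - Pr μ ({ω | G ω = 1} ∩ {ω | X ω = x})
            * Pr μ ({ω | R ω = 1} ∩ {ω | X ω = x ∧ G ω = 2}) * E2
          - Pr μ ({ω | G ω = 1} ∩ {ω | X ω = x}) * Pr μ {ω | X ω = x} * E1
    exact mul_right_cancel₀ (mul_ne_zero hdne hpne) h4
  rw [claimA, claimB]
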